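/- Let β ∈ (1,2) be the d-Bonacci number and T the symmetric β-transformation on X = [-1/2, β/2-1) ∪ [1-β/2, 1/2). Define the density f: X → ℝ by f(x) = ∑_{j=1}^k β^{-j} for x ∈ Y_{±k} (where Y_{±k}, 1 ≤ k ≤ d, are the intervals determined by the orbit of -1/2 as in the paper). Then the measure μ with dμ = f dx is T-invariant: for every interval I ⊆ X, μ(T^{-1}(I)) = μ(I). In particular f is bounded below by 1/β > 0 on X, so the support of the invariant measure is all of X. -/

import Mathlib

open MeasureTheory

lemma invm_key (d : ℕ) (β : ℝ) (h1 : 1 < β)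
    (hβ : β ^ d = ∑ i ∈ Finset.range d, β ^ i) : β ^ d * (β - 1) = β ^ d - 1 := by
  have hne : β ≠ 1 := h1.ne'
  rw [geom_sum_eq hne] at hβ
  have hβ1 : β - 1 ≠ 0 := sub_ne_zero.mpr hne
  field_simp at hβ
  linarith

lemma invm_sd (d : ℕ) (β : ℝ) (h1 : 1 < β)
    (hβ : β ^ d = ∑ i ∈ Finset.range d, β ^ i) : β ^ d * (1 - β/2) = 1/2 := by
  have h := invm_key d β h1 hβ
  nlinarith [h]

lemma invm_cd (d : ℕ) (β : ℝ) (h1 : 1 < β)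
    (hβ : β ^ d = ∑ i ∈ Finset.range d, β ^ i) :
    ∑ j ∈ Finset.Icc 1 d, (1/β) ^ j = 1 := by
  have hb0 : (0:ℝ) < β := lt_trans one_pos h1
  have hbne : β ≠ 0 := ne_of_gt hb0
  have hdpow : β ^ d ≠ 0 := pow_ne_zero _ hbne
  have h : (∑ j ∈ Finset.Icc 1 d, (1/β) ^ j) * β ^ d = β ^ d := by
    rw [Finset.sum_mul]
    calc ∑ j ∈ Finset.Icc 1 d, (1/β)^j * β^d
        = ∑ j ∈ Finset.Icc 1 d, β ^ (d - j) := by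
          apply Finset.sum_congr rfl
          intro j hj
          simp only [Finset.mem_Icc] at hj
          rw [one_div, inv_pow, inv_mul_eq_div, div_eq_mul_inv, ← pow_sub₀ β hbne hj.2]
      _ = ∑ i ∈ Finset.range d, β ^ (d - (i+1)) := by
          rw [← Finset.Ico_add_one_right_eq_Icc, Finset.sum_Ico_eq_sum_range]
          simp [add_comm]
      _ = ∑ i ∈ Finset.range d, β ^ i := by
          rw [← Finset.sum_range_reflect]
          apply Finset.sum_congr rfl
          intro i hi
          simp only [Finset.mem_range] at hi
          congr 1
          omega
      _ = β ^ d := hβ.symm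
  have := mul_right_cancel₀ hdpow (h.trans (one_mul (β^d)).symm)
  linarith [this]

lemma invm_rec (β : ℝ) (hb : β ≠ 0) (k : ℕ) :
    β * ∑ j ∈ Finset.Icc 1 (k+1), (1/β) ^ j = 1 + ∑ j ∈ Finset.Icc 1 k, (1/β) ^ j := by
  induction k with
  | zero => simp [hb]
  | succ n ih =>
    rw [Finset.sum_Icc_succ_top (by omega : 1 ≤ n+1+1), mul_add, ih,
        Finset.sum_Icc_succ_top (by omega : 1 ≤ n+1)]
    have : β * (1/β)^(n+1+1) = (1/β)^(n+1) := by
      rw [pow_succ (1/β) (n+1), mul_comm β, mul_assoc, one_div, inv_mul_cancel₀ hb, mul_one]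
    rw [this]; ring

lemma invm_cnn (β : ℝ) (hb : 0 < β) (k : ℕ) : 0 ≤ ∑ j ∈ Finset.Icc 1 k, (1/β) ^ j :=
  Finset.sum_nonneg fun j _ => pow_nonneg (by positivity) j

lemma invm_c1le (β : ℝ) (hb : 0 < β) (k : ℕ) (hk : 1 ≤ k) :
    1/β ≤ ∑ j ∈ Finset.Icc 1 k, (1/β) ^ j := by
  have := Finset.single_le_sum (f := fun j => (1/β)^j)
    (fun j _ => pow_nonneg (by positivity) j) (Finset.mem_Icc.mpr ⟨le_refl 1, hk⟩)
  simpa using this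

lemma invm_med (a b s s' : ℝ) (hab : a ≤ b) (hss : s ≤ s') :
    max a (min b s') - max a (min b s) = max 0 (min b s' - max a s) := by
  rcases le_total s' a with h|h <;> rcases le_total s b with h'|h' <;>
    rcases le_total s a with h''|h'' <;> rcases le_total s' b with h'''|h''' <;>
    simp [max_def, min_def] <;> split_ifs <;> linarith

lemma invm_tel (m : ℕ) (u : ℕ → ℝ) (hmono : ∀ i, i < m → u i ≤ u (i+1))
    (a b : ℝ) (hab : a ≤ b) (h0 : u 0 ≤ a) (hm : b ≤ u m) :
    ∑ k ∈ Finset.range m, max 0 (min b (u (k+1)) - max a (u k)) = b - a := by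
  have : ∀ k ∈ Finset.range m, max 0 (min b (u (k+1)) - max a (u k))
      = (fun k => max a (min b (u k))) (k+1) - (fun k => max a (min b (u k))) k := by
    intro k hk
    simp only [Finset.mem_range] at hk
    exact (invm_med a b (u k) (u (k+1)) hab (hmono k hk)).symm
  rw [Finset.sum_congr rfl this, Finset.sum_range_sub (f := fun k => max a (min b (u k)))]
  show max a (min b (u m)) - max a (min b (u 0)) = b - a
  rw [min_eq_left hm, min_eq_right (h0.trans hab), max_eq_right hab, max_eq_left h0]

lemma invm_branch' (β : ℝ) (T : ℝ → ℝ) (hT : ∀ x, T x = β * x - (⌊β * x + 1/2⌋ : ℤ))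
    (x : ℝ) (n : ℤ) (hlo : (n:ℝ) ≤ β * x + 1/2) (hhi : β * x + 1/2 < n + 1) :
    T x = β * x - n := by
  rw [hT]
  congr 2
  exact Int.floor_eq_iff.mpr ⟨hlo, hhi⟩

lemma invm_orbit (d : ℕ) (β : ℝ) (h1 : 1 < β) (h2 : β < 2)
    (hsd : β ^ d * (1 - β/2) = 1/2)
    (T : ℝ → ℝ) (hT : ∀ x, T x = β * x - (⌊β * x + 1/2⌋ : ℤ)) :
    ∀ k, 1 ≤ k → k ≤ d → T^[k] (-(1:ℝ)/2) = β ^ (k-1) * (1 - β/2) := by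
  have hc : (0:ℝ) < 1 - β/2 := by linarith
  intro k
  induction k with
  | zero => omega
  | succ n ih =>
    intro _ hnd
    rcases Nat.eq_zero_or_pos n with h0 | hpos
    · subst h0
      show T^[1] (-(1:ℝ)/2) = β ^ (0+1-1) * (1 - β/2)
      rw [Function.iterate_one,
        invm_branch' β T hT _ (-1) (by push_cast; linarith) (by push_cast; linarith)]
      push_cast; ring
    · have ihn := ih hpos (by omega)
      rw [Function.iterate_succ_apply', ihn]
      have hpow : β * β ^ (n-1) = β ^ n := by
        rw [← pow_succ']
        congr 1
        omega
      have hg2 : β * (β ^ (n-1) * (1 - β/2)) = β ^ n * (1 - β/2) := by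
        rw [← mul_assoc, hpow]
      have hklt : β ^ n * (1 - β/2) < 1/2 := by
        rw [← hsd]
        have : β ^ n < β ^ d := pow_lt_pow_right₀ h1 (by omega)
        nlinarith
      have hkpos : (0:ℝ) < β ^ n * (1 - β/2) := by positivity
      rw [invm_branch' β T hT _ 0 (by push_cast; linarith [hg2, hkpos])
        (by push_cast; linarith [hg2, hklt])]
      push_cast
      rw [sub_zero, hg2]

lemma invm_orm (L : ℝ) : ENNReal.ofReal (max 0 L) = ENNReal.ofReal L := by
  rcases le_total 0 L with h|h
  · rw [max_eq_right h]
  · rw [max_eq_left h, ENNReal.ofReal_of_nonpos h, ENNReal.ofReal_zero]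

lemma invm_max0_div (t β : ℝ) (hb : 0 < β) : max 0 (t/β) = max 0 t / β := by
  simpa using max_div_div_right hb.le 0 t

lemma invm_icc_range (d : ℕ) (F : ℕ → ℝ) :
    ∑ k ∈ Finset.Icc 1 d, F k = ∑ i ∈ Finset.range d, F (i+1) := by
  rw [← Finset.Ico_add_one_right_eq_Icc, Finset.sum_Ico_eq_sum_range]
  simp [add_comm]

lemma invm_mass (d : ℕ) (s : ℕ → ℝ) (hs : ∀ k, 0 ≤ s k) (c : ℕ → ℝ) (hc : ∀ k, 0 ≤ c k)
    (Y N : ℕ → Set ℝ)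
    (hYk : ∀ k ∈ Finset.Icc 1 d, Y k = Set.Ico (s (k-1)) (s k))
    (hNk : ∀ k ∈ Finset.Icc 1 d, N k = Set.Ico (-s k) (-s (k-1)))
    (f : ℝ → ℝ)
    (hf : ∀ x, f x = ∑ k ∈ Finset.Icc 1 d, Set.indicator (Y k ∪ N k) (fun _ => c k) x)
    (u v : ℝ) :
    (volume.withDensity fun x => ENNReal.ofReal (f x)) (Set.Ico u v)
      = ENNReal.ofReal (∑ k ∈ Finset.Icc 1 d, c k *
          (max 0 (min v (s k) - max u (s (k-1))) + max 0 (min v (-s (k-1)) - max u (-s k)))) := by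
  rw [withDensity_apply _ measurableSet_Ico]
  have hfx : ∀ x, ENNReal.ofReal (f x)
      = ∑ k ∈ Finset.Icc 1 d, Set.indicator (Y k ∪ N k) (fun _ => ENNReal.ofReal (c k)) x := by
    intro x
    rw [hf, ENNReal.ofReal_sum_of_nonneg (fun k _ => Set.indicator_nonneg (fun _ _ => hc k) x)]
    refine Finset.sum_congr rfl fun k _ => ?_
    by_cases hx : x ∈ Y k ∪ N k <;> simp [hx]
  rw [lintegral_congr hfx]
  rw [lintegral_finset_sum _ (fun k hk => Measurable.indicator measurable_const
    (by rw [hYk k hk, hNk k hk]; exact (measurableSet_Ico.union measurableSet_Ico)))]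
  rw [ENNReal.ofReal_sum_of_nonneg (fun k _ => mul_nonneg (hc k)
    (add_nonneg (le_max_left _ _) (le_max_left _ _)))]
  refine Finset.sum_congr rfl fun k hk => ?_
  rw [hYk k hk, hNk k hk]
  have hmeas : MeasurableSet (Set.Ico (s (k-1)) (s k) ∪ Set.Ico (-s k) (-s (k-1))) :=
    measurableSet_Ico.union measurableSet_Ico
  rw [lintegral_indicator hmeas, setLIntegral_const, Measure.restrict_apply hmeas]
  rw [Set.union_inter_distrib_right]
  have hdisj : Disjoint (Set.Ico (s (k-1)) (s k) ∩ Set.Ico u v)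
      (Set.Ico (-s k) (-s (k-1)) ∩ Set.Ico u v) := by
    refine Set.disjoint_left.mpr fun x hx hx' => ?_
    have h1 := hx.1.1
    have h2 := hx'.1.2
    have := hs (k-1)
    linarith
  rw [measure_union hdisj (measurableSet_Ico.inter measurableSet_Ico)]
  rw [Set.Ico_inter_Ico, Set.Ico_inter_Ico, Real.volume_Ico, Real.volume_Ico]
  rw [min_comm (s k) v, max_comm (s (k-1)) u, min_comm (-s (k-1)) v, max_comm (-s k) u,
      ← invm_orm (min v (s k) - max u (s (k-1))), ← invm_orm (min v (-s (k-1)) - max u (-s k)),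
      ← ENNReal.ofReal_add (le_max_left _ _) (le_max_left _ _),
      ← ENNReal.ofReal_mul (hc k), mul_add, ← mul_add]

lemma invm_pre_pos (β : ℝ) (h1 : 1 < β) (h2 : β < 2) (T : ℝ → ℝ)
    (hT : ∀ x, T x = β * x - (⌊β * x + 1/2⌋ : ℤ))
    (X : Set ℝ) (hX : X = Set.Ico (-(1:ℝ)/2) (β/2-1) ∪ Set.Ico (1-β/2) (1/2:ℝ))
    (a b : ℝ) (ha : 1 - β/2 ≤ a) (hb : b ≤ 1/2) :
    X ∩ T ⁻¹' Set.Ico a b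
      = Set.Ico ((a-1)/β) ((b-1)/β) ∪ Set.Ico (max (a/β) (1-β/2)) (b/β) := by
  have hb0 : (0:ℝ) < β := by linarith
  have hq : 2*β*(1 - β/2) < 1 := by nlinarith [sq_nonneg (β - 1)]
  ext x
  simp only [hX, Set.mem_inter_iff, Set.mem_union, Set.mem_preimage, Set.mem_Ico]
  constructor
  · rintro ⟨hx, hTx1, hTx2⟩
    rcases hx with ⟨hx1, hx2⟩ | ⟨hx1, hx2⟩
    · rcases lt_or_ge (β*x + 1/2) 0 with hn | hn
      · have hTx : T x = β * x + 1 := by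
          rw [invm_branch' β T hT x (-1) (by push_cast; nlinarith) (by push_cast; nlinarith)]
          push_cast; ring
        rw [hTx] at hTx1 hTx2
        exact Or.inl ⟨by rw [div_le_iff₀ hb0]; nlinarith, by rw [lt_div_iff₀ hb0]; nlinarith⟩
      · have hTx : T x = β * x := by
          rw [invm_branch' β T hT x 0 (by push_cast; nlinarith) (by push_cast; nlinarith)]
          push_cast; ring
        rw [hTx] at hTx1
        nlinarith
    · rcases lt_or_ge (β*x) (1/2) with hn | hn
      · have hTx : T x = β * x := by
          rw [invm_branch' β T hT x 0 (by push_cast; nlinarith) (by push_cast; nlinarith)]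
          push_cast; ring
        rw [hTx] at hTx1 hTx2
        refine Or.inr ⟨max_le (by rw [div_le_iff₀ hb0]; nlinarith) hx1,
            by rw [lt_div_iff₀ hb0]; nlinarith⟩
      · have hTx : T x = β * x - 1 := by
          rw [invm_branch' β T hT x 1 (by push_cast; nlinarith) (by push_cast; nlinarith)]
          push_cast; ring
        rw [hTx] at hTx1
        nlinarith
  · rintro (⟨hx1, hx2⟩ | ⟨hx1, hx2⟩)
    · rw [div_le_iff₀ hb0] at hx1
      rw [lt_div_iff₀ hb0] at hx2
      have hTx : T x = β * x + 1 := by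
        rw [invm_branch' β T hT x (-1) (by push_cast; nlinarith) (by push_cast; nlinarith)]
        push_cast; ring
      exact ⟨Or.inl ⟨by nlinarith, by nlinarith⟩, by rw [hTx]; constructor <;> nlinarith⟩
    · have hx1' : a/β ≤ x := le_trans (le_max_left _ _) hx1
      have hx1'' : 1 - β/2 ≤ x := le_trans (le_max_right _ _) hx1
      rw [div_le_iff₀ hb0] at hx1'
      rw [lt_div_iff₀ hb0] at hx2
      have hTx : T x = β * x := by
        rw [invm_branch' β T hT x 0 (by push_cast; nlinarith) (by push_cast; nlinarith)]
        push_cast; ring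
      exact ⟨Or.inr ⟨hx1'', by nlinarith⟩, by rw [hTx]; constructor <;> nlinarith⟩

lemma invm_pre_neg (β : ℝ) (h1 : 1 < β) (h2 : β < 2) (T : ℝ → ℝ)
    (hT : ∀ x, T x = β * x - (⌊β * x + 1/2⌋ : ℤ))
    (X : Set ℝ) (hX : X = Set.Ico (-(1:ℝ)/2) (β/2-1) ∪ Set.Ico (1-β/2) (1/2:ℝ))
    (a b : ℝ) (ha : -(1:ℝ)/2 ≤ a) (hb : b ≤ β/2-1) :
    X ∩ T ⁻¹' Set.Ico a b
      = Set.Ico ((a+1)/β) ((b+1)/β) ∪ Set.Ico (a/β) (min (b/β) (β/2-1)) := by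
  have hb0 : (0:ℝ) < β := by linarith
  have hq : 2*β*(1 - β/2) < 1 := by nlinarith [sq_nonneg (β - 1)]
  ext x
  simp only [hX, Set.mem_inter_iff, Set.mem_union, Set.mem_preimage, Set.mem_Ico]
  constructor
  · rintro ⟨hx, hTx1, hTx2⟩
    rcases hx with ⟨hx1, hx2⟩ | ⟨hx1, hx2⟩
    · rcases lt_or_ge (β*x + 1/2) 0 with hn | hn
      · have hTx : T x = β * x + 1 := by
          rw [invm_branch' β T hT x (-1) (by push_cast; nlinarith) (by push_cast; nlinarith)]
          push_cast; ring
        rw [hTx] at hTx2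
        nlinarith
      · have hTx : T x = β * x := by
          rw [invm_branch' β T hT x 0 (by push_cast; nlinarith) (by push_cast; nlinarith)]
          push_cast; ring
        rw [hTx] at hTx1 hTx2
        refine Or.inr ⟨by rw [div_le_iff₀ hb0]; nlinarith,
          lt_min (by rw [lt_div_iff₀ hb0]; nlinarith) hx2⟩
    · rcases lt_or_ge (β*x) (1/2) with hn | hn
      · have hTx : T x = β * x := by
          rw [invm_branch' β T hT x 0 (by push_cast; nlinarith) (by push_cast; nlinarith)]
          push_cast; ring
        rw [hTx] at hTx1
        nlinarith
      · have hTx : T x = β * x - 1 := by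
          rw [invm_branch' β T hT x 1 (by push_cast; nlinarith) (by push_cast; nlinarith)]
          push_cast; ring
        rw [hTx] at hTx1 hTx2
        exact Or.inl ⟨by rw [div_le_iff₀ hb0]; nlinarith, by rw [lt_div_iff₀ hb0]; nlinarith⟩
  · rintro (⟨hx1, hx2⟩ | ⟨hx1, hx2⟩)
    · rw [div_le_iff₀ hb0] at hx1
      rw [lt_div_iff₀ hb0] at hx2
      have hTx : T x = β * x - 1 := by
        rw [invm_branch' β T hT x 1 (by push_cast; nlinarith) (by push_cast; nlinarith)]
        push_cast; ring
      exact ⟨Or.inr ⟨by nlinarith, by nlinarith⟩, by rw [hTx]; constructor <;> nlinarith⟩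
    · have hx2' : x < b/β := lt_of_lt_of_le hx2 (min_le_left _ _)
      have hx2'' : x < β/2 - 1 := lt_of_lt_of_le hx2 (min_le_right _ _)
      rw [div_le_iff₀ hb0] at hx1
      rw [lt_div_iff₀ hb0] at hx2'
      have hTx : T x = β * x := by
        rw [invm_branch' β T hT x 0 (by push_cast; nlinarith) (by push_cast; nlinarith)]
        push_cast; ring
      exact ⟨Or.inl ⟨by nlinarith, hx2''⟩, by rw [hTx]; constructor <;> nlinarith⟩

lemma invm_loc_pos (d : ℕ) (s : ℕ → ℝ) (x : ℝ) (h0 : s 0 ≤ x) (hd : x < s d) :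
    ∃ k, 1 ≤ k ∧ k ≤ d ∧ s (k-1) ≤ x ∧ x < s k := by
  induction d with
  | zero => exact absurd (h0.trans_lt hd) (lt_irrefl _)
  | succ n ih =>
    rcases lt_or_ge x (s n) with h | h
    · obtain ⟨k, hk1, hk2, hk3, hk4⟩ := ih h
      exact ⟨k, hk1, by omega, hk3, hk4⟩
    · exact ⟨n+1, by omega, le_refl _, by simpa using h, hd⟩

lemma invm_loc_neg (d : ℕ) (s : ℕ → ℝ) (x : ℝ) (h0 : -s d ≤ x) (hd : x < -s 0) :
    ∃ k, 1 ≤ k ∧ k ≤ d ∧ -s k ≤ x ∧ x < -s (k-1) := by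
  induction d with
  | zero => exact absurd (h0.trans_lt hd) (lt_irrefl _)
  | succ n ih =>
    rcases le_or_gt (-s n) x with h | h
    · obtain ⟨k, hk1, hk2, hk3, hk4⟩ := ih h
      exact ⟨k, hk1, by omega, hk3, hk4⟩
    · exact ⟨n+1, by omega, le_refl _, h0, by simpa using h⟩

set_option maxHeartbeats 1000000 in
open MeasureTheory in
/-- The measure `dμ = f dx`, with piecewise-constant density `f = ∑_{j=1}^k β^{-j}` on
`Y_{±k}`, is invariant under the symmetric β-transformation `T`; moreover `f ≥ 1/β > 0`
on `X`, so the support of the invariant measure is all of `X`. -/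
theorem invariant_measure (d : ℕ) (hd : 2 ≤ d) (β : ℝ) (h1 : 1 < β) (h2 : β < 2)
    (hβ : β ^ d = ∑ i ∈ Finset.range d, β ^ i)
    (T : ℝ → ℝ) (hT : ∀ x, T x = β * x - (⌊β * x + 1/2⌋ : ℤ))
    (X : Set ℝ) (hX : X = Set.Ico (-(1 : ℝ)/2) (β/2 - 1) ∪ Set.Ico (1 - β/2) (1/2 : ℝ))
    (Y N : ℕ → Set ℝ)
    (hY : ∀ k, Y k = if k = d then Set.Ico (T^[d] (-(1:ℝ)/2)) (1/2 : ℝ)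
      else Set.Ico (T^[k] (-(1:ℝ)/2)) (T^[k+1] (-(1:ℝ)/2)))
    (hN : ∀ k, N k = if k = d then Set.Ico (-(1:ℝ)/2) (-(T^[d] (-(1:ℝ)/2)))
      else Set.Ico (-(T^[k+1] (-(1:ℝ)/2))) (-(T^[k] (-(1:ℝ)/2))))
    (f : ℝ → ℝ)
    (hf : ∀ x, f x = ∑ k ∈ Finset.Icc 1 d,
      Set.indicator (Y k ∪ N k) (fun _ => ∑ j ∈ Finset.Icc 1 k, (1/β) ^ j) x)
    (μ : Measure ℝ) (hμ : μ = volume.withDensity (fun x => ENNReal.ofReal (f x))) :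
    (∀ a b : ℝ, Set.Ico a b ⊆ X → μ (X ∩ T ⁻¹' Set.Ico a b) = μ (Set.Ico a b)) ∧
    (∀ x ∈ X, 1/β ≤ f x) ∧ (0 : ℝ) < 1/β := by
  have hb0 : (0:ℝ) < β := by linarith
  have hbne : β ≠ 0 := ne_of_gt hb0
  have hcpos : (0:ℝ) < 1 - β/2 := by linarith
  have hsd0 : β ^ d * (1 - β/2) = 1/2 := invm_sd d β h1 hβ
  obtain ⟨s, hs_def⟩ : ∃ s : ℕ → ℝ, ∀ k, s k = β ^ k * (1 - β/2) := ⟨_, fun _ => rfl⟩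
  obtain ⟨c, hc_def⟩ : ∃ c : ℕ → ℝ, ∀ k, c k = ∑ j ∈ Finset.Icc 1 k, (1/β)^j :=
    ⟨_, fun _ => rfl⟩
  have hs_nn : ∀ k, 0 ≤ s k := fun k => by rw [hs_def]; positivity
  have hs_pos : ∀ k, 0 < s k := fun k => by rw [hs_def]; positivity
  have hs0 : s 0 = 1 - β/2 := by rw [hs_def]; ring
  have hs_d : s d = 1/2 := by rw [hs_def]; exact hsd0
  have hs_mono : ∀ i j, i ≤ j → s i ≤ s j := by
    intro i j hij
    rw [hs_def, hs_def]
    exact mul_le_mul_of_nonneg_right (pow_le_pow_right₀ h1.le hij) hcpos.le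
  have hs_succ : ∀ k, s (k+1) = β * s k := by
    intro k
    rw [hs_def, hs_def, pow_succ]
    ring
  have hs_d1 : β * s (d-1) = 1/2 := by
    have e : d - 1 + 1 = d := by omega
    calc β * s (d-1) = s (d-1+1) := (hs_succ _).symm
      _ = s d := by rw [e]
      _ = 1/2 := hs_d
  have hc_nn : ∀ k, 0 ≤ c k := fun k => by rw [hc_def]; exact invm_cnn β hb0 k
  have hc0 : c 0 = 0 := by rw [hc_def]; simp
  have hcd1 : c d = 1 := by rw [hc_def]; exact invm_cd d β h1 hβ
  have hrec : ∀ k, β * c (k+1) = 1 + c k := fun k => by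
    rw [hc_def, hc_def]; exact invm_rec β hbne k
  have hc1 : ∀ k, 1 ≤ k → 1/β ≤ c k := fun k hk => by
    rw [hc_def]; exact invm_c1le β hb0 k hk
  have horb := invm_orbit d β h1 h2 hsd0 T hT
  have hYk : ∀ k ∈ Finset.Icc 1 d, Y k = Set.Ico (s (k-1)) (s k) := by
    intro k hk
    rw [Finset.mem_Icc] at hk
    rw [hY k]
    rcases eq_or_ne k d with hkd | hkd
    · subst hkd
      rw [if_pos rfl, horb k (by omega) le_rfl, hs_def (k-1), hs_def k, hsd0]
    · rw [if_neg hkd, horb k (by omega) (by omega), horb (k+1) (by omega) (by omega),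
        hs_def (k-1), hs_def k]
      simp only [Nat.add_sub_cancel]
  have hNk : ∀ k ∈ Finset.Icc 1 d, N k = Set.Ico (-s k) (-s (k-1)) := by
    intro k hk
    rw [Finset.mem_Icc] at hk
    rw [hN k]
    rcases eq_or_ne k d with hkd | hkd
    · subst hkd
      rw [if_pos rfl, horb k (by omega) le_rfl, hs_def (k-1), hs_def k, hsd0]
      norm_num
    · rw [if_neg hkd, horb k (by omega) (by omega), horb (k+1) (by omega) (by omega),
        hs_def (k-1), hs_def k]
      simp only [Nat.add_sub_cancel]
  have hf' : ∀ x, f x = ∑ k ∈ Finset.Icc 1 d,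
      Set.indicator (Y k ∪ N k) (fun _ => c k) x := by
    intro x
    rw [hf]
    refine Finset.sum_congr rfl fun k _ => ?_
    rw [hc_def k]
  have hmass : ∀ u v : ℝ, μ (Set.Ico u v) = ENNReal.ofReal (∑ k ∈ Finset.Icc 1 d, c k *
      (max 0 (min v (s k) - max u (s (k-1))) + max 0 (min v (-s (k-1)) - max u (-s k)))) := by
    intro u v
    rw [hμ]
    exact invm_mass d s hs_nn c hc_nn Y N hYk hNk f hf' u v
  refine ⟨?_, ?_, one_div_pos.mpr hb0⟩
  · intro a b hsub
    rcases le_or_gt b a with hba | hab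
    · rw [Set.Ico_eq_empty (not_lt.mpr hba)]
      simp
    · have haX := hsub (Set.mem_Ico.mpr ⟨le_refl a, hab⟩)
      rw [hX] at haX
      simp only [Set.mem_union, Set.mem_Ico] at haX
      rcases haX with ⟨ha1, ha2⟩ | ⟨ha1, ha2⟩
      · -- negative component
        have hbup : b ≤ β/2 - 1 := by
          by_contra hcon
          push_neg at hcon
          have hmem := hsub (Set.mem_Ico.mpr ⟨le_of_lt ha2, hcon⟩)
          rw [hX] at hmem
          simp only [Set.mem_union, Set.mem_Ico] at hmem
          rcases hmem with h | h
          · exact absurd h.2 (lt_irrefl _)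
          · linarith [h.1]
        obtain ⟨L, hL⟩ : ∃ L : ℕ → ℝ, ∀ k, L k = max 0 (min b (-s (k-1)) - max a (-s k)) :=
          ⟨_, fun _ => rfl⟩
        have hLnn : ∀ k, 0 ≤ L k := fun k => by rw [hL]; exact le_max_left _ _
        have hA0 : ∑ k ∈ Finset.Icc 1 d, c k * (max 0 (min b (s k) - max a (s (k-1)))
            + max 0 (min b (-s (k-1)) - max a (-s k))) = ∑ k ∈ Finset.Icc 1 d, c k * L k := by
          refine Finset.sum_congr rfl fun k hk => ?_
          rw [Finset.mem_Icc] at hk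
          have hY0 : max 0 (min b (s k) - max a (s (k-1))) = 0 :=
            max_eq_left (by
              have q1 := min_le_left b (s k)
              have q2 := hs_mono 0 (k-1) (by omega)
              have q3 := le_max_right a (s (k-1))
              have q4 := hs_pos 0
              linarith [hs0])
          rw [hY0, zero_add, hL]
        have hu1 : s (d-1) ≤ (a+1)/β := by
          rw [le_div_iff₀ hb0]
          nlinarith [hs_d1]
        have hupos : 0 ≤ (a+1)/β := div_nonneg (by linarith) hb0.le
        have hv1 : (b+1)/β ≤ s d := by
          rw [hs_d, div_le_iff₀ hb0]
          linarith
        have hA1 : ∑ k ∈ Finset.Icc 1 d, c k *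
            (max 0 (min ((b+1)/β) (s k) - max ((a+1)/β) (s (k-1)))
            + max 0 (min ((b+1)/β) (-s (k-1)) - max ((a+1)/β) (-s k))) = (b - a)/β := by
          rw [Finset.sum_eq_single_of_mem d (Finset.mem_Icc.mpr ⟨by omega, le_rfl⟩)]
          · have e1 : min ((b+1)/β) (s d) = (b+1)/β := min_eq_left hv1
            have e2 : max ((a+1)/β) (s (d-1)) = (a+1)/β := max_eq_left hu1
            have e3 : max 0 (min ((b+1)/β) (-s (d-1)) - max ((a+1)/β) (-s d)) = 0 :=
              max_eq_left (by
                have q1 := min_le_right ((b+1)/β) (-s (d-1))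
                have q2 := le_max_left ((a+1)/β) (-s d)
                have q3 := hs_pos (d-1)
                linarith)
            have e4 : (0:ℝ) ≤ (b+1)/β - (a+1)/β :=
              sub_nonneg.mpr ((div_le_div_iff_of_pos_right hb0).mpr (by linarith))
            rw [e1, e2, e3, hcd1, one_mul, add_zero, max_eq_right e4]
            field_simp
            ring
          · intro k hk hkd
            rw [Finset.mem_Icc] at hk
            have hz1 : max 0 (min ((b+1)/β) (s k) - max ((a+1)/β) (s (k-1))) = 0 :=
              max_eq_left (by
                have q1 := min_le_right ((b+1)/β) (s k)
                have q2 := hs_mono k (d-1) (by omega)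
                have q3 := le_max_left ((a+1)/β) (s (k-1))
                linarith [hu1])
            have hz2 : max 0 (min ((b+1)/β) (-s (k-1)) - max ((a+1)/β) (-s k)) = 0 :=
              max_eq_left (by
                have q1 := min_le_right ((b+1)/β) (-s (k-1))
                have q2 := le_max_left ((a+1)/β) (-s k)
                have q3 := hs_pos (k-1)
                linarith)
            rw [hz1, hz2, add_zero, mul_zero]
        have hA2 : ∑ k ∈ Finset.Icc 1 d, c k *
            (max 0 (min (min (b/β) (β/2-1)) (s k) - max (a/β) (s (k-1)))
            + max 0 (min (min (b/β) (β/2-1)) (-s (k-1)) - max (a/β) (-s k)))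
            = ∑ k ∈ Finset.Icc 1 d, c k * (if k = d then 0 else L (k+1)/β) := by
          refine Finset.sum_congr rfl fun k hk => ?_
          rw [Finset.mem_Icc] at hk
          have hY0 : max 0 (min (min (b/β) (β/2-1)) (s k) - max (a/β) (s (k-1))) = 0 :=
            max_eq_left (by
              have q1 := min_le_left (min (b/β) (β/2-1)) (s k)
              have q2 := min_le_right (b/β) (β/2-1)
              have q3 := hs_mono 0 (k-1) (by omega)
              have q4 := le_max_right (a/β) (s (k-1))
              have q5 := hs_pos 0
              linarith [hs0])
          rw [hY0, zero_add]
          rcases eq_or_ne k d with hkd | hkd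
          · subst hkd
            rw [if_pos rfl]
            have hq1 : -s (k-1) ≤ a/β := by
              rw [le_div_iff₀ hb0]
              nlinarith [hs_d1]
            rw [max_eq_left (by
              have q1 := min_le_right (min (b/β) (β/2-1)) (-s (k-1))
              have q2 := le_max_left (a/β) (-s k)
              linarith)]
          · rw [if_neg hkd]
            have ek : k - 1 + 1 = k := by omega
            have hsk1 : -s (k-1) = (-s k) / β := by
              have hthis := hs_succ (k-1)
              rw [ek] at hthis
              rw [hthis]
              field_simp
            have hsk2 : -s k = (-s (k+1)) / β := by
              rw [hs_succ k]
              field_simp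
            have e0 : min (β/2-1) (-s (k-1)) = -s (k-1) :=
              min_eq_right (by
                have := hs_mono 0 (k-1) (by omega)
                linarith [hs0])
            have e1 : min (min (b/β) (β/2-1)) (-s (k-1)) = min b (-s k) / β := by
              rw [min_assoc, e0, hsk1]
              exact min_div_div_right hb0.le b (-s k)
            have e2 : max (a/β) (-s k) = max a (-s (k+1)) / β := by
              rw [hsk2]
              exact max_div_div_right hb0.le a (-s (k+1))
            rw [hL, e1, e2, ← sub_div, invm_max0_div _ _ hb0]
            simp only [Nat.add_sub_cancel]
        rw [invm_pre_neg β h1 h2 T hT X hX a b ha1 hbup]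
        have hdisj : Disjoint (Set.Ico ((a+1)/β) ((b+1)/β))
            (Set.Ico (a/β) (min (b/β) (β/2-1))) := by
          refine Set.disjoint_left.mpr ?_
          rintro x ⟨hx1, _⟩ ⟨_, hx2⟩
          have h3 : 0 < (a+1)/β := div_pos (by linarith) hb0
          have h4 := lt_of_lt_of_le hx2 (min_le_right _ _)
          linarith
        rw [measure_union hdisj measurableSet_Ico, hmass, hmass, hmass, hA0, hA1, hA2]
        rw [← ENNReal.ofReal_add (div_nonneg (by linarith) hb0.le)
          (Finset.sum_nonneg fun k _ => mul_nonneg (hc_nn k)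
            (by by_cases h : k = d <;> simp [h, div_nonneg (hLnn _) hb0.le]))]
        congr 1
        have htel : ∑ i ∈ Finset.range d, L (i+1) = b - a := by
          have hmono : ∀ i, i < d → (fun j => -s (d-j)) i ≤ (fun j => -s (d-j)) (i+1) := by
            intro i hi
            simp only
            exact neg_le_neg (hs_mono (d-(i+1)) (d-i) (by omega))
          have h0 : (fun j => -s (d-j)) 0 ≤ a := by
            simp only [Nat.sub_zero]
            rw [hs_d]; linarith
          have hm : b ≤ (fun j => -s (d-j)) d := by
            simp only [Nat.sub_self]
            rw [hs0]; linarith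
          have h := invm_tel d (fun j => -s (d-j)) hmono a b hab.le h0 hm
          calc ∑ i ∈ Finset.range d, L (i+1)
              = ∑ j ∈ Finset.range d, L (d-1-j+1) :=
                (Finset.sum_range_reflect (fun i => L (i+1)) d).symm
            _ = b - a := by
                rw [← h]
                refine Finset.sum_congr rfl fun j hj => ?_
                rw [Finset.mem_range] at hj
                rw [hL]
                have e1 : d - 1 - j + 1 - 1 = d - (j+1) := by omega
                have e2 : d - 1 - j + 1 = d - j := by omega
                rw [e1, e2]
        have hshift : ∑ k ∈ Finset.Icc 1 d, c k * (if k = d then 0 else L (k+1)/β)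
            = ∑ i ∈ Finset.range d, c i * L (i+1) / β := by
          rw [invm_icc_range]
          obtain ⟨m, rfl⟩ : ∃ m, d = m+1 := ⟨d-1, by omega⟩
          rw [Finset.sum_range_succ, Finset.sum_range_succ']
          simp only [hc0, eq_self_iff_true, if_true, mul_zero, add_zero, zero_mul,
            zero_div, zero_add]
          refine Finset.sum_congr rfl fun i hi => ?_
          rw [Finset.mem_range] at hi
          rw [if_neg (by omega)]
          ring
        rw [hshift, invm_icc_range d (fun k => c k * L k), ← htel, Finset.sum_div,
          ← Finset.sum_add_distrib]
        refine Finset.sum_congr rfl fun i _ => ?_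
        have hr := hrec i
        have hci : c (i+1) = (1 + c i)/β := by
          field_simp
          linarith [hr]
        rw [hci]
        field_simp
      · -- positive component
        have hbup : b ≤ 1/2 := by
          by_contra hcon
          push_neg at hcon
          have hmem := hsub (Set.mem_Ico.mpr ⟨le_of_lt ha2, hcon⟩)
          rw [hX] at hmem
          simp only [Set.mem_union, Set.mem_Ico] at hmem
          rcases hmem with h | h
          · linarith [h.2]
          · exact absurd h.2 (lt_irrefl _)
        obtain ⟨L, hL⟩ : ∃ L : ℕ → ℝ, ∀ k, L k = max 0 (min b (s k) - max a (s (k-1))) :=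
          ⟨_, fun _ => rfl⟩
        have hLnn : ∀ k, 0 ≤ L k := fun k => by rw [hL]; exact le_max_left _ _
        have hB0 : ∑ k ∈ Finset.Icc 1 d, c k * (max 0 (min b (s k) - max a (s (k-1)))
            + max 0 (min b (-s (k-1)) - max a (-s k))) = ∑ k ∈ Finset.Icc 1 d, c k * L k := by
          refine Finset.sum_congr rfl fun k hk => ?_
          rw [Finset.mem_Icc] at hk
          have hN0 : max 0 (min b (-s (k-1)) - max a (-s k)) = 0 :=
            max_eq_left (by
              have q1 := min_le_right b (-s (k-1))
              have q2 := hs_mono 0 (k-1) (by omega)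
              have q3 := le_max_left a (-s k)
              have q4 := hs_pos 0
              linarith [hs0])
          rw [hN0, add_zero, hL]
        have hv1 : (b-1)/β ≤ -s (d-1) := by
          rw [div_le_iff₀ hb0]
          nlinarith [hs_d1]
        have hu1 : -s d ≤ (a-1)/β := by
          rw [le_div_iff₀ hb0, hs_d]
          nlinarith
        have hB1 : ∑ k ∈ Finset.Icc 1 d, c k *
            (max 0 (min ((b-1)/β) (s k) - max ((a-1)/β) (s (k-1)))
            + max 0 (min ((b-1)/β) (-s (k-1)) - max ((a-1)/β) (-s k))) = (b - a)/β := by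
          rw [Finset.sum_eq_single_of_mem d (Finset.mem_Icc.mpr ⟨by omega, le_rfl⟩)]
          · have e1 : min ((b-1)/β) (-s (d-1)) = (b-1)/β := min_eq_left hv1
            have e2 : max ((a-1)/β) (-s d) = (a-1)/β := max_eq_left hu1
            have e3 : max 0 (min ((b-1)/β) (s d) - max ((a-1)/β) (s (d-1))) = 0 :=
              max_eq_left (by
                have q1 := min_le_left ((b-1)/β) (s d)
                have q2 := le_max_right ((a-1)/β) (s (d-1))
                have q3 := hs_pos (d-1)
                linarith)
            have e4 : (0:ℝ) ≤ (b-1)/β - (a-1)/β :=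
              sub_nonneg.mpr ((div_le_div_iff_of_pos_right hb0).mpr (by linarith))
            rw [e1, e2, e3, hcd1, one_mul, zero_add, max_eq_right e4]
            field_simp
            ring
          · intro k hk hkd
            rw [Finset.mem_Icc] at hk
            have hz1 : max 0 (min ((b-1)/β) (s k) - max ((a-1)/β) (s (k-1))) = 0 :=
              max_eq_left (by
                have q1 := min_le_left ((b-1)/β) (s k)
                have q2 := le_max_right ((a-1)/β) (s (k-1))
                have q3 := hs_pos (k-1)
                linarith [hv1, hs_pos (d-1)])
            have hz2 : max 0 (min ((b-1)/β) (-s (k-1)) - max ((a-1)/β) (-s k)) = 0 :=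
              max_eq_left (by
                have q1 := min_le_left ((b-1)/β) (-s (k-1))
                have q2 := hs_mono k (d-1) (by omega)
                have q3 := le_max_right ((a-1)/β) (-s k)
                linarith [hv1])
            rw [hz1, hz2, add_zero, mul_zero]
        have hB2 : ∑ k ∈ Finset.Icc 1 d, c k *
            (max 0 (min (b/β) (s k) - max (max (a/β) (1-β/2)) (s (k-1)))
            + max 0 (min (b/β) (-s (k-1)) - max (max (a/β) (1-β/2)) (-s k)))
            = ∑ k ∈ Finset.Icc 1 d, c k * (if k = d then 0 else L (k+1)/β) := by
          refine Finset.sum_congr rfl fun k hk => ?_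
          rw [Finset.mem_Icc] at hk
          have hN0 : max 0 (min (b/β) (-s (k-1)) - max (max (a/β) (1-β/2)) (-s k)) = 0 :=
            max_eq_left (by
              have q1 := min_le_right (b/β) (-s (k-1))
              have q2 := hs_mono 0 (k-1) (by omega)
              have q3 : (1-β/2 : ℝ) ≤ max (a/β) (1-β/2) := le_max_right _ _
              have q4 := le_max_left (max (a/β) (1-β/2)) (-s k)
              have q5 := hs_pos 0
              linarith [hs0])
          rw [hN0, add_zero]
          rcases eq_or_ne k d with hkd | hkd
          · subst hkd
            rw [if_pos rfl]
            have hvd : b/β ≤ s (k-1) := by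
              rw [div_le_iff₀ hb0]
              nlinarith [hs_d1]
            rw [max_eq_left (by
              have q1 := min_le_left (b/β) (s k)
              have q2 := le_max_right (max (a/β) (1-β/2)) (s (k-1))
              linarith)]
          · rw [if_neg hkd]
            have ek : k - 1 + 1 = k := by omega
            have hsk1 : s (k-1) = s k / β := by
              have hthis := hs_succ (k-1)
              rw [ek] at hthis
              rw [hthis]
              field_simp
            have hsk2 : s k = s (k+1) / β := by
              rw [hs_succ k]
              field_simp
            have e0 : max (1-β/2) (s (k-1)) = s (k-1) :=
              max_eq_right (by
                have := hs_mono 0 (k-1) (by omega)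
                linarith [hs0])
            have e1 : min (b/β) (s k) = min b (s (k+1)) / β := by
              rw [hsk2]
              exact min_div_div_right hb0.le b (s (k+1))
            have e2 : max (max (a/β) (1-β/2)) (s (k-1)) = max a (s k) / β := by
              rw [max_assoc, e0, hsk1]
              exact max_div_div_right hb0.le a (s k)
            rw [hL, e1, e2, ← sub_div, invm_max0_div _ _ hb0]
            simp only [Nat.add_sub_cancel]
        rw [invm_pre_pos β h1 h2 T hT X hX a b ha1 hbup]
        have hdisj : Disjoint (Set.Ico ((a-1)/β) ((b-1)/β))
            (Set.Ico (max (a/β) (1-β/2)) (b/β)) := by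
          refine Set.disjoint_left.mpr ?_
          rintro x ⟨_, hx1⟩ ⟨hx2, _⟩
          have h3 : (b-1)/β ≤ 0 := div_nonpos_of_nonpos_of_nonneg (by linarith) hb0.le
          have h4 := le_trans (le_max_right (a/β) (1-β/2)) hx2
          linarith
        rw [measure_union hdisj measurableSet_Ico, hmass, hmass, hmass, hB0, hB1, hB2]
        rw [← ENNReal.ofReal_add (div_nonneg (by linarith) hb0.le)
          (Finset.sum_nonneg fun k _ => mul_nonneg (hc_nn k)
            (by by_cases h : k = d <;> simp [h, div_nonneg (hLnn _) hb0.le]))]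
        congr 1
        have htel : ∑ i ∈ Finset.range d, L (i+1) = b - a := by
          have hmono : ∀ i, i < d → s i ≤ s (i+1) := fun i _ => hs_mono i (i+1) (by omega)
          have h0 : s 0 ≤ a := by rw [hs0]; linarith
          have hm : b ≤ s d := by rw [hs_d]; linarith
          have h := invm_tel d s hmono a b hab.le h0 hm
          rw [← h]
          refine Finset.sum_congr rfl fun j hj => ?_
          rw [hL]
          simp only [Nat.add_sub_cancel]
        have hshift : ∑ k ∈ Finset.Icc 1 d, c k * (if k = d then 0 else L (k+1)/β)
            = ∑ i ∈ Finset.range d, c i * L (i+1) / β := by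
          rw [invm_icc_range]
          obtain ⟨m, rfl⟩ : ∃ m, d = m+1 := ⟨d-1, by omega⟩
          rw [Finset.sum_range_succ, Finset.sum_range_succ']
          simp only [hc0, eq_self_iff_true, if_true, mul_zero, add_zero, zero_mul,
            zero_div, zero_add]
          refine Finset.sum_congr rfl fun i hi => ?_
          rw [Finset.mem_range] at hi
          rw [if_neg (by omega)]
          ring
        rw [hshift, invm_icc_range d (fun k => c k * L k), ← htel, Finset.sum_div,
          ← Finset.sum_add_distrib]
        refine Finset.sum_congr rfl fun i _ => ?_
        have hr := hrec i
        have hci : c (i+1) = (1 + c i)/β := by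
          field_simp
          linarith [hr]
        rw [hci]
        field_simp
  · intro x hx
    rw [hX] at hx
    rw [hf x]
    simp only [Set.mem_union, Set.mem_Ico] at hx
    rcases hx with ⟨hx1, hx2⟩ | ⟨hx1, hx2⟩
    · obtain ⟨k, hk1, hk2, hk3, hk4⟩ := invm_loc_neg d s x
        (by rw [hs_d]; linarith) (by rw [hs0]; linarith)
      have hmem : x ∈ Y k ∪ N k :=
        Or.inr (by rw [hNk k (Finset.mem_Icc.mpr ⟨hk1, hk2⟩)]; exact ⟨hk3, hk4⟩)
      calc 1/β ≤ c k := hc1 k hk1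
        _ = Set.indicator (Y k ∪ N k) (fun _ => ∑ j ∈ Finset.Icc 1 k, (1/β)^j) x := by
            rw [Set.indicator_of_mem hmem]
            exact hc_def k
        _ ≤ ∑ i ∈ Finset.Icc 1 d,
              Set.indicator (Y i ∪ N i) (fun _ => ∑ j ∈ Finset.Icc 1 i, (1/β)^j) x :=
            Finset.single_le_sum
              (f := fun i => Set.indicator (Y i ∪ N i)
                (fun _ => ∑ j ∈ Finset.Icc 1 i, (1/β)^j) x)
              (fun j _ => Set.indicator_nonneg (fun _ _ => invm_cnn β hb0 j) x)
              (Finset.mem_Icc.mpr ⟨hk1, hk2⟩)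
    · obtain ⟨k, hk1, hk2, hk3, hk4⟩ := invm_loc_pos d s x
        (by rw [hs0]; linarith) (by rw [hs_d]; linarith)
      have hmem : x ∈ Y k ∪ N k :=
        Or.inl (by rw [hYk k (Finset.mem_Icc.mpr ⟨hk1, hk2⟩)]; exact ⟨hk3, hk4⟩)
      calc 1/β ≤ c k := hc1 k hk1
        _ = Set.indicator (Y k ∪ N k) (fun _ => ∑ j ∈ Finset.Icc 1 k, (1/β)^j) x := by
            rw [Set.indicator_of_mem hmem]
            exact hc_def k
        _ ≤ ∑ i ∈ Finset.Icc 1 d,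
              Set.indicator (Y i ∪ N i) (fun _ => ∑ j ∈ Finset.Icc 1 i, (1/β)^j) x :=
            Finset.single_le_sum
              (f := fun i => Set.indicator (Y i ∪ N i)
                (fun _ => ∑ j ∈ Finset.Icc 1 i, (1/β)^j) x)
              (fun j _ => Set.indicator_nonneg (fun _ _ => invm_cnn β hb0 j) x)
              (Finset.mem_Icc.mpr ⟨hk1, hk2⟩)
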